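/- Let k be a field, Q ⊆ ℤ^d a sharp affine semigroup, and R = k[Q] its (noetherian) semigroup algebra. For a face F' of Q let P_{F'} denote the ideal of R spanned as a k-vector space by the monomials x^q with q ∈ Q ∖ F', and let dim F' be the dimension of the ℝ-linear span of F'. Fix a face F of Q, and let M be a finitely generated R-module such that every associated prime of M equals P_{F'} for some face F' of Q with dim F' ≥ dim F (as holds when M is ℤ^d-graded and F has minimal dimension among the faces of Q whose prime P_F is associated to M). Then the natural map from the submodule (0 :_M P_F) = {m ∈ M : P_F · m = 0} to its localization at the multiplicative set of monomials {x^f : f ∈ F} is injective; equivalently, if m ∈ M satisfies P_F · m = 0 and x^f · m = 0 for some f ∈ F, then m = 0. -/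

import Mathlib

open Pointwise

/-- Coercion of a lattice point in `ℤ^d` to a point of `ℝ^d`. -/
def toR {d : ℕ} (x : Fin d → ℤ) : Fin d → ℝ := fun i => (x i : ℝ)

/-- `F` is a face of the affine semigroup (given as a subset of `ℤ^d`) `Q`:
it is cut out of `Q` by a `ℤ`-linear functional that is nonnegative on `Q`. -/
def IsFaceOf {d : ℕ} (Q F : Set (Fin d → ℤ)) : Prop :=
  ∃ lam : (Fin d → ℤ) →ₗ[ℤ] ℤ, (∀ q ∈ Q, 0 ≤ lam q) ∧ F = {q | q ∈ Q ∧ lam q = 0}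

/-- The dimension of a face: the dimension of its `ℝ`-linear span. -/
noncomputable def faceDim {d : ℕ} (F : Set (Fin d → ℤ)) : ℕ :=
  Module.finrank ℝ (Submodule.span ℝ (toR '' F))

/-- The `k`-span of the monomials `x^q` with `q ∈ Q ∖ F'`; for a face `F'` this is
the prime ideal `P_{F'}` of `k[Q]`. -/
noncomputable def facePrimeSpan {d : ℕ} (k : Type*) [Field k] (Q : AddSubmonoid (Fin d → ℤ))
    (F' : Set (Fin d → ℤ)) : Submodule k (AddMonoidAlgebra k ↥Q) :=
  Submodule.span k
    {f | ∃ q : ↥Q, (q : Fin d → ℤ) ∉ F' ∧ f = AddMonoidAlgebra.single q (1 : k)}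

/-- Lemma 3.2.  Let `Q` be a sharp affine semigroup, `F` a face of `Q`,
and `M` a finitely generated `k[Q]`-module all of whose associated primes are of the form
`P_{F'}` for faces `F'` with `dim F' ≥ dim F`.  If `m ∈ M` is annihilated by `P_F` and by
some monomial `x^f` with `f ∈ F`, then `m = 0`; that is, the natural map from
`(0 :_M P_F)` to its localization along `F` is injective. -/
lemma single_mem_facePrimeSpan_iff {d : ℕ} (k : Type*) [Field k]
    (Q : AddSubmonoid (Fin d → ℤ)) (F' : Set (Fin d → ℤ)) (q : ↥Q) :
    AddMonoidAlgebra.single q (1 : k) ∈ facePrimeSpan k Q F' ↔ (q : Fin d → ℤ) ∉ F' := by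
  have hspan : facePrimeSpan k Q F'
      = AddMonoidAlgebra.supported k k {q : ↥Q | (q : Fin d → ℤ) ∉ F'} := by
    rw [AddMonoidAlgebra.supported_eq_span_single]
    unfold facePrimeSpan
    congr 1
    ext g
    constructor
    · rintro ⟨q, hq, rfl⟩; exact ⟨q, hq, rfl⟩
    · rintro ⟨q, hq, rfl⟩; exact ⟨q, hq, rfl⟩
  rw [hspan]
  rw [AddMonoidAlgebra.mem_supported, AddMonoidAlgebra.coeff_single, Finsupp.support_single_ne_zero _ one_ne_zero]
  simp

lemma faceDim_lt_of_ssubset {d : ℕ} {Q F F' : Set (Fin d → ℤ)}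
    (hF' : IsFaceOf Q F') (hsub : F' ⊆ F) (f : Fin d → ℤ) (hfF : f ∈ F) (hfQ : f ∈ Q)
    (hfF' : f ∉ F') : faceDim F' < faceDim F := by
  obtain ⟨μ, hμnn, hμeq⟩ := hF'
  -- the real extension of μ
  let e : Fin d → Fin d → ℤ := fun i j => if i = j then 1 else 0
  let μℝ : (Fin d → ℝ) →ₗ[ℝ] ℝ :=
    { toFun := fun x => ∑ i, x i * (μ (e i) : ℝ)
      map_add' := by intro x y; simp [add_mul, Finset.sum_add_distrib]
      map_smul' := by intro c x; simp [Finset.mul_sum, mul_assoc] }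
  have hcompat : ∀ q : Fin d → ℤ, μℝ (toR q) = (μ q : ℝ) := by
    intro q
    have h1 : μ q = ∑ i, q i • μ (e i) := by
      conv_lhs => rw [LinearMap.pi_apply_eq_sum_univ μ q]
    show ∑ i, (q i : ℝ) * (μ (e i) : ℝ) = (μ q : ℝ)
    rw [h1]
    push_cast
    simp [zsmul_eq_mul]
  have hker : Submodule.span ℝ (toR '' F') ≤ LinearMap.ker μℝ := by
    rw [Submodule.span_le]
    rintro _ ⟨q, hq, rfl⟩
    have hq0 : μ q = 0 := by
      rw [hμeq] at hq; exact hq.2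
    simp [LinearMap.mem_ker, hcompat q, hq0]
  have hfnot : toR f ∉ Submodule.span ℝ (toR '' F') := by
    intro hmem
    have h0 : μℝ (toR f) = 0 := hker hmem
    rw [hcompat f] at h0
    have : μ f = 0 := by exact_mod_cast h0
    exact hfF' (by rw [hμeq]; exact ⟨hfQ, this⟩)
  have hlt : Submodule.span ℝ (toR '' F') < Submodule.span ℝ (toR '' F) :=
    lt_of_le_of_ne (Submodule.span_mono (Set.image_mono hsub))
      (fun h => hfnot (h ▸ Submodule.subset_span ⟨f, hfF, rfl⟩))
  exact Submodule.finrank_lt_finrank_of_lt hlt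

theorem stmt9 {d : ℕ} (k : Type*) [Field k]
    (Q : AddSubmonoid (Fin d → ℤ)) (hfg : Q.FG)
    (hsharp : (Q : Set (Fin d → ℤ)) ∩ (-(Q : Set (Fin d → ℤ))) = {0})
    (F : Set (Fin d → ℤ)) (hF : IsFaceOf (Q : Set (Fin d → ℤ)) F)
    (M : Type*) [AddCommGroup M] [Module (AddMonoidAlgebra k ↥Q) M]
    [Module.Finite (AddMonoidAlgebra k ↥Q) M]
    (hass : ∀ p ∈ associatedPrimes (AddMonoidAlgebra k ↥Q) M,
      ∃ F' : Set (Fin d → ℤ), IsFaceOf (Q : Set (Fin d → ℤ)) F' ∧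
        faceDim F ≤ faceDim F' ∧
        (p : Set (AddMonoidAlgebra k ↥Q)) = (facePrimeSpan k Q F' : Set (AddMonoidAlgebra k ↥Q)))
    (m : M)
    (hann : ∀ r ∈ facePrimeSpan k Q F, r • m = 0)
    (f : ↥Q) (hfF : (f : Fin d → ℤ) ∈ F)
    (hfm : AddMonoidAlgebra.single f (1 : k) • m = 0) :
    m = 0 := by
  by_contra hm
  classical
  -- `k[Q]` is noetherian
  haveI : AddMonoid.FG ↥Q := by
    rw [AddMonoid.fg_iff_addSubmonoid_fg]
    exact hfg
  haveI : IsNoetherianRing (AddMonoidAlgebra k ↥Q) :=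
    Algebra.FiniteType.isNoetherianRing k (AddMonoidAlgebra k ↥Q)
  obtain ⟨P, hP, hle⟩ :=
    exists_le_isAssociatedPrime_of_isNoetherianRing (AddMonoidAlgebra k ↥Q) m hm
  obtain ⟨F', hF', hdim, hPcar⟩ := hass P hP
  have hmemP : ∀ r : AddMonoidAlgebra k ↥Q, r • m = 0 → r ∈ P := by
    intro r hr
    exact hle (by rwa [Submodule.mem_colon_singleton, Submodule.mem_bot])
  -- `F' ⊆ F`
  have hsub : F' ⊆ F := by
    intro q hq
    have hqQ : q ∈ Q := by
      obtain ⟨μ, _, hμeq⟩ := hF'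
      rw [hμeq] at hq; exact hq.1
    by_contra hqF
    have h1 : AddMonoidAlgebra.single (⟨q, hqQ⟩ : ↥Q) (1 : k) ∈ facePrimeSpan k Q F :=
      Submodule.subset_span ⟨⟨q, hqQ⟩, hqF, rfl⟩
    have h2 : AddMonoidAlgebra.single (⟨q, hqQ⟩ : ↥Q) (1 : k) ∈ P :=
      hmemP _ (hann _ h1)
    have h3 : AddMonoidAlgebra.single (⟨q, hqQ⟩ : ↥Q) (1 : k) ∈ facePrimeSpan k Q F' := by
      have : AddMonoidAlgebra.single (⟨q, hqQ⟩ : ↥Q) (1 : k) ∈ (P : Set (AddMonoidAlgebra k ↥Q)) := h2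
      rwa [hPcar] at this
    rw [single_mem_facePrimeSpan_iff] at h3
    exact h3 hq
  -- `f ∉ F'`
  have hfF' : (f : Fin d → ℤ) ∉ F' := by
    have h2 : AddMonoidAlgebra.single f (1 : k) ∈ P := hmemP _ hfm
    have h3 : AddMonoidAlgebra.single f (1 : k) ∈ facePrimeSpan k Q F' := by
      have : AddMonoidAlgebra.single f (1 : k) ∈ (P : Set (AddMonoidAlgebra k ↥Q)) := h2
      rwa [hPcar] at this
    rwa [single_mem_facePrimeSpan_iff] at h3
  have := faceDim_lt_of_ssubset hF' hsub (f : Fin d → ℤ) hfF f.2 hfF'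
  omega
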